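/- For every iteration t ≥ 0 and every δ > 0, the asynchrony cross term is bounded as: ⟨(1/m)Σ_{j=1}^m ∇L_j(x^t) − (1/m)Σ_{j=1}^m ∇L_j(x^{t_j(t)}), Δ^{(t)}⟩ + ⟨∇L_1(x^{t_1(t)}) − ∇L_1(x^t), Δ^{(t)}⟩ ≤ (L/δ) Σ_{k=1}^{τ} ‖Δ^{(t−k)}‖² + L δ τ ‖Δ^{(t)}‖². -/

import Mathlib

open scoped RealInnerProductSpace

theorem stmt_2
    {p m τ : ℕ} (hp : 1 ≤ p) (hm : 0 < m)
    {L : ℝ}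
    (hL : 0 < L)
    (Lf : Fin m → EuclideanSpace ℝ (Fin p) → ℝ)
    (hdiff : ∀ j, Differentiable ℝ (Lf j))
    (hlip : ∀ j (u v : EuclideanSpace ℝ (Fin p)), ‖gradient (Lf j) u - gradient (Lf j) v‖ ≤ L * ‖u - v‖)
    (tj : ℕ → Fin m → ℕ)
    (htj : ∀ t j, t - τ ≤ tj t j ∧ tj t j ≤ t)
    (x : ℕ → EuclideanSpace ℝ (Fin p))
    (Δ : ℤ → EuclideanSpace ℝ (Fin p))
    (hΔ : ∀ s : ℤ, 0 ≤ s → Δ s = x (s.toNat + 1) - x s.toNat)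
    (hΔneg : ∀ s : ℤ, s < 0 → Δ s = 0)
    (t : ℕ) (δ : ℝ) (hδ : 0 < δ)
    :
    ⟪((m : ℝ)⁻¹ • ∑ i, gradient (Lf i) (x t)) - (m : ℝ)⁻¹ • ∑ i, gradient (Lf i) (x (tj t i)),
        Δ (t : ℤ)⟫ +
      ⟪gradient (Lf ⟨0, hm⟩) (x (tj t ⟨0, hm⟩)) - gradient (Lf ⟨0, hm⟩) (x t), Δ (t : ℤ)⟫ ≤
      L / δ * ∑ k ∈ Finset.Icc 1 τ, ‖Δ ((t : ℤ) - (k : ℤ))‖ ^ 2 + L * δ * (τ : ℝ) * ‖Δ (t : ℤ)‖ ^ 2 := by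
  set b := ‖Δ (t:ℤ)‖ with hbdef
  have hb : (0:ℝ) ≤ b := norm_nonneg _
  set S := ∑ k ∈ Finset.Icc 1 τ, ‖Δ ((t:ℤ) - (k:ℤ))‖ with hS
  have hSnn : 0 ≤ S := Finset.sum_nonneg fun _ _ => norm_nonneg _
  -- telescoping
  have tele : ∀ u v : ℕ, u ≤ v → x v - x u = ∑ i ∈ Finset.Ico u v, Δ (i:ℤ) := by
    intro u v huv
    induction v, huv using Nat.le_induction with
    | base => simp
    | succ v huv ih =>
      rw [Finset.sum_Ico_succ_top (by omega : u ≤ v), ← ih,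
        hΔ (v:ℤ) (by positivity)]
      simp only [Int.toNat_natCast]
      abel
  -- norm of x t - x s bounded by S
  have hnormS : ∀ j : Fin m, ‖x t - x (tj t j)‖ ≤ S := by
    intro j
    obtain ⟨hs1, hs2⟩ := htj t j
    set s := tj t j
    rw [tele s t hs2]
    calc ‖∑ i ∈ Finset.Ico s t, Δ (i:ℤ)‖ ≤ ∑ i ∈ Finset.Ico s t, ‖Δ (i:ℤ)‖ :=
          norm_sum_le _ _
      _ = ∑ k ∈ Finset.Icc 1 (t - s), ‖Δ ((t:ℤ) - (k:ℤ))‖ := by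
          refine Finset.sum_nbij' (fun i => t - i) (fun k => t - k) ?_ ?_ ?_ ?_ ?_ <;>
            (intro a ha; simp only [Finset.mem_Ico, Finset.mem_Icc] at ha ⊢)
          · omega
          · omega
          · omega
          · omega
          · rw [show ((t:ℤ) - ((t - a : ℕ):ℤ)) = (a:ℤ) from by omega]
      _ ≤ S := by
          apply Finset.sum_le_sum_of_subset_of_nonneg
          · apply Finset.Icc_subset_Icc_right; omega
          · intros; exact norm_nonneg _
  -- per-j bounds
  have key : ∀ j : Fin m,
      ⟪gradient (Lf j) (x t) - gradient (Lf j) (x (tj t j)), Δ (t:ℤ)⟫ ≤ L * S * b := by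
    intro j
    calc ⟪gradient (Lf j) (x t) - gradient (Lf j) (x (tj t j)), Δ (t:ℤ)⟫
        ≤ ‖gradient (Lf j) (x t) - gradient (Lf j) (x (tj t j))‖ * b := real_inner_le_norm _ _
      _ ≤ (L * ‖x t - x (tj t j)‖) * b := by
          apply mul_le_mul_of_nonneg_right (hlip j _ _) hb
      _ ≤ L * S * b := by
          apply mul_le_mul_of_nonneg_right _ hb
          exact mul_le_mul_of_nonneg_left (hnormS j) hL.le
  have keyb : ∀ j : Fin m,
      ⟪gradient (Lf j) (x (tj t j)) - gradient (Lf j) (x t), Δ (t:ℤ)⟫ ≤ L * S * b := by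
    intro j
    calc ⟪gradient (Lf j) (x (tj t j)) - gradient (Lf j) (x t), Δ (t:ℤ)⟫
        ≤ ‖gradient (Lf j) (x (tj t j)) - gradient (Lf j) (x t)‖ * b := real_inner_le_norm _ _
      _ ≤ (L * ‖x (tj t j) - x t‖) * b := by
          apply mul_le_mul_of_nonneg_right (hlip j _ _) hb
      _ ≤ L * S * b := by
          apply mul_le_mul_of_nonneg_right _ hb
          apply mul_le_mul_of_nonneg_left _ hL.le
          rw [norm_sub_rev]; exact hnormS j
  -- average term bound
  have hA : ⟪((m : ℝ)⁻¹ • ∑ i, gradient (Lf i) (x t)) - (m : ℝ)⁻¹ • ∑ i, gradient (Lf i) (x (tj t i)),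
      Δ (t:ℤ)⟫ ≤ L * S * b := by
    rw [← smul_sub, real_inner_smul_left, ← Finset.sum_sub_distrib, sum_inner]
    have hsum : ∑ i : Fin m, ⟪gradient (Lf i) (x t) - gradient (Lf i) (x (tj t i)), Δ (t:ℤ)⟫
        ≤ (m:ℝ) * (L * S * b) := by
      calc ∑ i : Fin m, ⟪gradient (Lf i) (x t) - gradient (Lf i) (x (tj t i)), Δ (t:ℤ)⟫
          ≤ ∑ _i : Fin m, L * S * b := Finset.sum_le_sum fun i _ => key i
        _ = (m:ℝ) * (L * S * b) := by simp [mul_comm]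
    have hminv : (0:ℝ) ≤ (m:ℝ)⁻¹ := by positivity
    calc (m:ℝ)⁻¹ * ∑ i : Fin m, ⟪gradient (Lf i) (x t) - gradient (Lf i) (x (tj t i)), Δ (t:ℤ)⟫
        ≤ (m:ℝ)⁻¹ * ((m:ℝ) * (L * S * b)) := mul_le_mul_of_nonneg_left hsum hminv
      _ = L * S * b := by
          field_simp
  -- AM-GM step
  have hAMGM : 2 * S * b ≤ (∑ k ∈ Finset.Icc 1 τ, ‖Δ ((t:ℤ) - (k:ℤ))‖ ^ 2) / δ + (τ:ℝ) * (δ * b ^ 2) := by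
    have hterm : ∀ k ∈ Finset.Icc 1 τ,
        2 * ‖Δ ((t:ℤ) - (k:ℤ))‖ * b ≤ ‖Δ ((t:ℤ) - (k:ℤ))‖ ^ 2 / δ + δ * b ^ 2 := by
      intro k _
      have h := sq_nonneg (‖Δ ((t:ℤ) - (k:ℤ))‖ - δ * b)
      rw [div_add' _ _ _ (ne_of_gt hδ), le_div_iff₀ hδ]
      nlinarith
    calc 2 * S * b = ∑ k ∈ Finset.Icc 1 τ, 2 * ‖Δ ((t:ℤ) - (k:ℤ))‖ * b := by
          rw [hS, Finset.mul_sum, Finset.sum_mul]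
      _ ≤ ∑ k ∈ Finset.Icc 1 τ, (‖Δ ((t:ℤ) - (k:ℤ))‖ ^ 2 / δ + δ * b ^ 2) :=
          Finset.sum_le_sum hterm
      _ = (∑ k ∈ Finset.Icc 1 τ, ‖Δ ((t:ℤ) - (k:ℤ))‖ ^ 2) / δ + (τ:ℝ) * (δ * b ^ 2) := by
          rw [Finset.sum_add_distrib, ← Finset.sum_div, Finset.sum_const]
          simp [Nat.card_Icc]
  have hB := keyb ⟨0, hm⟩
  have hfinal : L * (2 * S * b) ≤ L * ((∑ k ∈ Finset.Icc 1 τ, ‖Δ ((t:ℤ) - (k:ℤ))‖ ^ 2) / δ + (τ:ℝ) * (δ * b ^ 2)) :=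
    mul_le_mul_of_nonneg_left hAMGM hL.le
  calc ⟪((m : ℝ)⁻¹ • ∑ i, gradient (Lf i) (x t)) - (m : ℝ)⁻¹ • ∑ i, gradient (Lf i) (x (tj t i)), Δ (t:ℤ)⟫
        + ⟪gradient (Lf ⟨0, hm⟩) (x (tj t ⟨0, hm⟩)) - gradient (Lf ⟨0, hm⟩) (x t), Δ (t:ℤ)⟫
      ≤ L * S * b + L * S * b := add_le_add hA hB
    _ = L * (2 * S * b) := by ring
    _ ≤ L * ((∑ k ∈ Finset.Icc 1 τ, ‖Δ ((t:ℤ) - (k:ℤ))‖ ^ 2) / δ + (τ:ℝ) * (δ * b ^ 2)) := hfinal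
    _ = L / δ * ∑ k ∈ Finset.Icc 1 τ, ‖Δ ((t:ℤ) - (k:ℤ))‖ ^ 2 + L * δ * (τ:ℝ) * b ^ 2 := by ring
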